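/- Let λ₁, λ₂ be coprime positive integers with λ₁ ≡ λ₂ + 1 (mod 3), S = {0, λ₁, λ₁+λ₂}, and A ⊆ ℤ an S-free set. For t ∈ ℤ let I₁(t) = {t+1, ..., t+2λ₁+λ₂} and I₂(t) = {t+λ₁+λ₂+1, ..., t+3λ₁+2λ₂}. Then 2|I₁(t) \ A| + |I₂(t) \ A| ≥ 2λ₁+λ₂. -/

import Mathlib

open Filter Set

/-- The translateSet `S + t` of a set of integers. -/
def translateSet (S : Set ℤ) (t : ℤ) : Set ℤ := (· + t) '' S

/-- Upper density of a set of integers. -/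
noncomputable def upperDensity (A : Set ℤ) : ℝ :=
  Filter.limsup (fun n : ℕ => ((A ∩ Set.Icc (-(n : ℤ)) (n : ℤ)).ncard : ℝ) / (2 * n + 1)) Filter.atTop

/-- Lower density of a set of integers. -/
noncomputable def lowerDensity (A : Set ℤ) : ℝ :=
  Filter.liminf (fun n : ℕ => ((A ∩ Set.Icc (-(n : ℤ)) (n : ℤ)).ncard : ℝ) / (2 * n + 1)) Filter.atTop

/-- `A` is `S`-covering: every integer lies in some translateSet `S + a`, `a ∈ A`. -/
def SCovering (S A : Set ℤ) : Prop := ∀ t : ℤ, ∃ a ∈ A, t ∈ translateSet S a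

/-- `A` is `S`-blocking: `A` meets every translateSet of `S`. -/
def SBlocking (S A : Set ℤ) : Prop := ∀ t : ℤ, (A ∩ translateSet S t).Nonempty

/-- `A` is `S`-free: `A` contains no translateSet of `S`. -/
def SFree (S A : Set ℤ) : Prop := ∀ t : ℤ, ¬ translateSet S t ⊆ A

/-- `A` is `S`-packing: distinct translates `S + a₁`, `S + a₂` with `a₁, a₂ ∈ A` are disjoint. -/
def SPacking (S A : Set ℤ) : Prop :=
  ∀ a₁ ∈ A, ∀ a₂ ∈ A, a₁ ≠ a₂ → Disjoint (translateSet S a₁) (translateSet S a₂)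

/-- Maximum packing density of `S`. -/
noncomputable def dP (S : Set ℤ) : ℝ := sSup (upperDensity '' {A | SPacking S A})

/-- Minimum covering density of `S`. -/
noncomputable def dC (S : Set ℤ) : ℝ := sInf (lowerDensity '' {A | SCovering S A})

/-- Minimum blocking density of `S`. -/
noncomputable def dB (S : Set ℤ) : ℝ := sInf (lowerDensity '' {A | SBlocking S A})

/-- `d_f(S)`: supremum of upper densities of `S`-free sets. -/
noncomputable def dF (S : Set ℤ) : ℝ := sSup (upperDensity '' {A | SFree S A})

/-- `d_f(S, -S)`: supremum of upper densities of sets free of translates of both `S` and `-S`. -/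
noncomputable def dF2 (S : Set ℤ) : ℝ := sSup (upperDensity '' {A | SFree S A ∧ SFree (-S) A})

theorem stmt6 (l1 l2 : ℤ) (h1 : 0 < l1) (h2 : 0 < l2) (hco : Int.gcd l1 l2 = 1)
    (hmod : l1 % 3 = (l2 + 1) % 3) (A : Set ℤ)
    (hA : SFree ({0, l1, l1 + l2} : Set ℤ) A) (t : ℤ) :
    2 * ((Set.Icc (t + 1) (t + 2 * l1 + l2) \ A).ncard : ℤ) +
      ((Set.Icc (t + l1 + l2 + 1) (t + 3 * l1 + 2 * l2) \ A).ncard : ℤ) ≥ 2 * l1 + l2 := by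
  classical
  have hS : ∀ x : ℤ, x ∈ A → x + l1 ∈ A → x + l1 + l2 ∈ A → False := by
    intro x hx hx1 hx2
    apply hA x
    rintro z ⟨s, hs, rfl⟩
    simp only [Set.mem_insert_iff, Set.mem_singleton_iff] at hs
    rcases hs with rfl | rfl | rfl
    · simpa using hx
    · simpa [add_comm] using hx1
    · show l1 + l2 + x ∈ A
      rw [show l1 + l2 + x = x + l1 + l2 by ring]; exact hx2
  set J : Finset ℤ := Finset.Icc (t+1) (t+2*l1+l2) with hJ
  set F1 : Finset ℤ := J.filter (fun x => x ∉ A) with hF1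
  set F2 : Finset ℤ := (Finset.Icc (t+l1+l2+1) (t+3*l1+2*l2)).filter (fun x => x ∉ A) with hF2
  have hmemF1 : ∀ x : ℤ, x ∈ F1 ↔ (t+1 ≤ x ∧ x ≤ t+2*l1+l2) ∧ x ∉ A := by
    intro x; simp [hF1, hJ, Finset.mem_filter, Finset.mem_Icc]
  have hmemF2 : ∀ x : ℤ, x ∈ F2 ↔ (t+l1+l2+1 ≤ x ∧ x ≤ t+3*l1+2*l2) ∧ x ∉ A := by
    intro x; simp [hF2, Finset.mem_filter, Finset.mem_Icc]
  set φ : ℤ → ℤ := fun m =>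
    if m ∉ A then m
    else if m + l1 ∉ A then m + l1
    else if m + l2 ∈ A ∧ t + l1 + 1 ≤ m ∧ m ≤ t + 2*l1 then m - l1
    else m + l1 + l2 with hφ
  have hchar : ∀ m : ℤ, (m ∉ A ∧ φ m = m) ∨
      (m ∈ A ∧ m + l1 ∉ A ∧ φ m = m + l1) ∨
      (m ∈ A ∧ m + l2 ∈ A ∧ t+l1+1 ≤ m ∧ m ≤ t+2*l1 ∧ φ m = m - l1 ∧ m - l1 ∉ A) ∨
      (m ∈ A ∧ m + l1 ∈ A ∧ ¬(m + l2 ∈ A ∧ t+l1+1 ≤ m ∧ m ≤ t+2*l1) ∧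
        φ m = m + l1 + l2 ∧ m + l1 + l2 ∉ A) := by
    intro m
    by_cases hm1 : m ∈ A
    · by_cases hm2 : m + l1 ∈ A
      · by_cases hm3 : m + l2 ∈ A ∧ t+l1+1 ≤ m ∧ m ≤ t+2*l1
        · refine Or.inr (Or.inr (Or.inl ⟨hm1, hm3.1, hm3.2.1, hm3.2.2, ?_, ?_⟩))
          · show (if m ∉ A then m else if m + l1 ∉ A then m + l1
              else if m + l2 ∈ A ∧ t + l1 + 1 ≤ m ∧ m ≤ t + 2*l1 then m - l1
              else m + l1 + l2) = m - l1
            rw [if_neg (not_not_intro hm1), if_neg (not_not_intro hm2), if_pos hm3]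
          · intro hc
            exact hS (m - l1) hc (by simpa using hm1)
              (by rw [show m - l1 + l1 + l2 = m + l2 by ring]; exact hm3.1)
        · refine Or.inr (Or.inr (Or.inr ⟨hm1, hm2, hm3, ?_, fun hc => hS m hm1 hm2 hc⟩))
          show (if m ∉ A then m else if m + l1 ∉ A then m + l1
              else if m + l2 ∈ A ∧ t + l1 + 1 ≤ m ∧ m ≤ t + 2*l1 then m - l1
              else m + l1 + l2) = m + l1 + l2
          rw [if_neg (not_not_intro hm1), if_neg (not_not_intro hm2), if_neg hm3]
      · refine Or.inr (Or.inl ⟨hm1, hm2, ?_⟩)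
        show (if m ∉ A then m else if m + l1 ∉ A then m + l1
            else if m + l2 ∈ A ∧ t + l1 + 1 ≤ m ∧ m ≤ t + 2*l1 then m - l1
            else m + l1 + l2) = m + l1
        rw [if_neg (not_not_intro hm1), if_pos hm2]
    · refine Or.inl ⟨hm1, ?_⟩
      show (if m ∉ A then m else if m + l1 ∉ A then m + l1
          else if m + l2 ∈ A ∧ t + l1 + 1 ≤ m ∧ m ≤ t + 2*l1 then m - l1
          else m + l1 + l2) = m
      rw [if_pos hm1]
  have key : ∀ m ∈ J, φ m ∈ F1 ∪ F2 := by
    intro m hm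
    have hmJ : t+1 ≤ m ∧ m ≤ t+2*l1+l2 := by simpa [hJ, Finset.mem_Icc] using hm
    rcases hchar m with ⟨h, he⟩ | ⟨_, h, he⟩ | ⟨_, _, hb1, hb2, he, h⟩ | ⟨_, _, _, he, h⟩
    · rw [he]; exact Finset.mem_union_left _ ((hmemF1 m).mpr ⟨by omega, h⟩)
    · rw [he]
      by_cases hc : m ≤ t + l1 + l2
      · exact Finset.mem_union_left _ ((hmemF1 _).mpr ⟨by omega, h⟩)
      · exact Finset.mem_union_right _ ((hmemF2 _).mpr ⟨by omega, h⟩)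
    · rw [he]; exact Finset.mem_union_left _ ((hmemF1 _).mpr ⟨by omega, h⟩)
    · rw [he]; exact Finset.mem_union_right _ ((hmemF2 _).mpr ⟨by omega, h⟩)
  set w : ℤ → ℕ := fun y => (if y ∈ F1 then 2 else 0) + (if y ∈ F2 then 1 else 0) with hw
  have bound : ∀ y : ℤ, (J.filter (fun m => φ m = y)).card ≤ w y := by
    intro y
    rcases Finset.eq_empty_or_nonempty (J.filter (fun m => φ m = y)) with he | ⟨m0, hm0⟩
    · simp [he]
    · have hm0' := Finset.mem_filter.mp hm0
      have hyU : y ∈ F1 ∪ F2 := hm0'.2 ▸ key m0 hm0'.1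
      have hyA : y ∉ A := by
        rcases Finset.mem_union.mp hyU with h | h
        · exact ((hmemF1 y).mp h).2
        · exact ((hmemF2 y).mp h).2
      have hyrange : t+1 ≤ y ∧ y ≤ t+3*l1+2*l2 := by
        rcases Finset.mem_union.mp hyU with h | h
        · have := ((hmemF1 y).mp h).1; omega
        · have := ((hmemF2 y).mp h).1; omega
      have hmm : ∀ m ∈ J.filter (fun m => φ m = y),
          (t+1 ≤ m ∧ m ≤ t+2*l1+l2) ∧
          (m = y ∨ (m = y - l1 ∧ m ∈ A) ∨
            (m = y + l1 ∧ t+l1+1 ≤ m ∧ m ≤ t+2*l1) ∨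
            (m = y - l1 - l2 ∧ ¬(m + l2 ∈ A ∧ t+l1+1 ≤ m ∧ m ≤ t+2*l1))) := by
        intro m hm
        obtain ⟨hmJ, hmy⟩ := Finset.mem_filter.mp hm
        have hmJ' : t+1 ≤ m ∧ m ≤ t+2*l1+l2 := by simpa [hJ, Finset.mem_Icc] using hmJ
        refine ⟨hmJ', ?_⟩
        rcases hchar m with ⟨h, he⟩ | ⟨hA2, h, he⟩ | ⟨_, _, hb1, hb2, he, h⟩ | ⟨_, _, hnc, he, h⟩
        · left; omega
        · right; left; constructor
          · omega
          · exact hA2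
        · right; right; left; omega
        · right; right; right
          refine ⟨by omega, hnc⟩
      by_cases hr1 : y ≤ t + l1
      · have hsub : J.filter (fun m => φ m = y) ⊆ {y, y + l1} := by
          intro m hm
          obtain ⟨hmJ, hd⟩ := hmm m hm
          simp only [Finset.mem_insert, Finset.mem_singleton]
          rcases hd with h | ⟨h, _⟩ | ⟨h, _, _⟩ | ⟨h, _⟩ <;> omega
        have hyF1 : y ∈ F1 := (hmemF1 y).mpr ⟨by omega, hyA⟩
        calc (J.filter (fun m => φ m = y)).card ≤ ({y, y + l1} : Finset ℤ).card :=
              Finset.card_le_card hsub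
          _ ≤ 2 := (Finset.card_insert_le _ _).trans (by simp)
          _ ≤ w y := by simp only [hw]; rw [if_pos hyF1]; exact Nat.le_add_right 2 _
      · by_cases hr2 : y ≤ t + l1 + l2
        · have hsub : J.filter (fun m => φ m = y) ⊆ {y, y - l1} := by
            intro m hm
            obtain ⟨hmJ, hd⟩ := hmm m hm
            simp only [Finset.mem_insert, Finset.mem_singleton]
            rcases hd with h | ⟨h, _⟩ | ⟨h, _, _⟩ | ⟨h, _⟩ <;> omega
          have hyF1 : y ∈ F1 := (hmemF1 y).mpr ⟨by omega, hyA⟩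
          calc (J.filter (fun m => φ m = y)).card ≤ ({y, y - l1} : Finset ℤ).card :=
                Finset.card_le_card hsub
            _ ≤ 2 := (Finset.card_insert_le _ _).trans (by simp)
            _ ≤ w y := by simp only [hw]; rw [if_pos hyF1]; exact Nat.le_add_right 2 _
        · by_cases hr3 : y ≤ t + 2*l1 + l2
          · have hsub : J.filter (fun m => φ m = y) ⊆ {y, y - l1, y - l1 - l2} := by
              intro m hm
              obtain ⟨hmJ, hd⟩ := hmm m hm
              simp only [Finset.mem_insert, Finset.mem_singleton]
              rcases hd with h | ⟨h, _⟩ | ⟨h, _, _⟩ | ⟨h, _⟩ <;> omega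
            have hyF1 : y ∈ F1 := (hmemF1 y).mpr ⟨by omega, hyA⟩
            have hyF2 : y ∈ F2 := (hmemF2 y).mpr ⟨by omega, hyA⟩
            calc (J.filter (fun m => φ m = y)).card ≤ ({y, y - l1, y - l1 - l2} : Finset ℤ).card :=
                  Finset.card_le_card hsub
              _ ≤ 3 := (Finset.card_insert_le _ _).trans
                  (by simpa using Nat.add_le_add_right (Finset.card_insert_le (y - l1) ({y - l1 - l2} : Finset ℤ)) 1)
              _ ≤ w y := by simp only [hw]; rw [if_pos hyF1, if_pos hyF2]
          · have hyF2 : y ∈ F2 := (hmemF2 y).mpr ⟨by omega, hyA⟩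
            have hone : (J.filter (fun m => φ m = y)).card ≤ 1 := by
              rw [Finset.card_le_one]
              intro a ha b hb
              obtain ⟨haJ, hda⟩ := hmm a ha
              obtain ⟨hbJ, hdb⟩ := hmm b hb
              rcases hda with h | ⟨ha2, haA⟩ | ⟨h, _, _⟩ | ⟨ha4, hna⟩ <;>
                rcases hdb with h' | ⟨hb2, hbA⟩ | ⟨h', _, _⟩ | ⟨hb4, hnb⟩
              all_goals first
                | omega
                | (exfalso; apply hnb; refine ⟨?_, by omega, by omega⟩;
                   rw [show b + l2 = a by omega]; exact haA)
                | (exfalso; apply hna; refine ⟨?_, by omega, by omega⟩;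
                   rw [show a + l2 = b by omega]; exact hbA)
            calc (J.filter (fun m => φ m = y)).card ≤ 1 := hone
              _ ≤ w y := by
                  simp only [hw]; rw [if_pos hyF2]; exact Nat.le_add_left 1 _
  have hcount : J.card ≤ 2 * F1.card + F2.card := by
    have hs1 : J.card = ∑ y ∈ J.image φ, (J.filter (fun m => φ m = y)).card :=
      Finset.card_eq_sum_card_image φ J
    have hs2 : ∑ y ∈ J.image φ, (J.filter (fun m => φ m = y)).card ≤ ∑ y ∈ J.image φ, w y :=
      Finset.sum_le_sum fun y _ => bound y
    have hs3 : ∑ y ∈ J.image φ, w y ≤ ∑ y ∈ F1 ∪ F2, w y := by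
      apply Finset.sum_le_sum_of_subset
      intro y hy
      rcases Finset.mem_image.mp hy with ⟨m, hm, rfl⟩
      exact key m hm
    have hs4 : ∑ y ∈ F1 ∪ F2, w y = 2 * F1.card + F2.card := by
      simp only [hw]
      rw [Finset.sum_add_distrib, Finset.sum_ite_mem, Finset.sum_ite_mem,
        Finset.union_inter_cancel_left, Finset.union_inter_cancel_right]
      simp [mul_comm]
    omega
  have hc1 : (Set.Icc (t+1) (t+2*l1+l2) \ A).ncard = F1.card := by
    rw [show Set.Icc (t+1) (t+2*l1+l2) \ A = (F1 : Set ℤ) by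
      ext x
      simp [hF1, hJ, Set.mem_Icc, Finset.mem_filter, Finset.mem_Icc, Set.mem_diff]]
    exact Set.ncard_coe_finset _
  have hc2 : (Set.Icc (t+l1+l2+1) (t+3*l1+2*l2) \ A).ncard = F2.card := by
    rw [show Set.Icc (t+l1+l2+1) (t+3*l1+2*l2) \ A = (F2 : Set ℤ) by
      ext x
      simp [hF2, Set.mem_Icc, Finset.mem_filter, Finset.mem_Icc, Set.mem_diff]]
    exact Set.ncard_coe_finset _
  have hJc : (J.card : ℤ) = 2*l1 + l2 := by
    rw [hJ, Int.card_Icc, Int.toNat_of_nonneg (by omega)]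
    ring
  rw [show (t + 1 : ℤ) = t + 1 from rfl] at *
  rw [hc1, hc2]
  omega
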